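/- Suppose the pair (λ,β) is T-log-symplectic and let S be a nonempty subset of S(λ,β). The following are equivalent: (1) S is linearly independent over ℂ as a subset of ℂ^n; (2) S is linearly independent over ℤ, i.e. the only family of integers (m_θ)_{θ∈S} with Σ_θ m_θ θ = 0 is the zero family; (3) 0 ∉ S_{≥1}. -/

import Mathlib

open Finset Matrix

noncomputable section

/-- The standard embedding of an integer vector into `ℂⁿ`. -/
def cvec {n : ℕ} (w : Fin n → ℤ) : Fin n → ℂ := fun j => (w j : ℂ)

/-- `J_w = { j : w_j = -1 }`. -/
def Jset {n : ℕ} (w : Fin n → ℤ) : Finset (Fin n) :=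
  Finset.univ.filter (fun j => w j = -1)

/-- The linear map `β : ℂⁿ → V`, `w ↦ ∑ w_j β_j`. -/
def bmap {n : ℕ} {V : Type*} [AddCommGroup V] [Module ℂ V]
    (β : Fin n → V) (w : Fin n → ℂ) : V :=
  ∑ j, w j • β j

/-- The pair `(λ, β)` is T-log-symplectic. -/
def TLogSymp {n : ℕ} {V : Type*} [AddCommGroup V] [Module ℂ V]
    (M : Matrix (Fin n) (Fin n) ℂ) (β : Fin n → V) : Prop :=
  ∀ w : Fin n → ℂ, M.mulVec w = 0 → bmap β w = 0 → w = 0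

/-- The set `W(λ, β)`. -/
def Wset {n : ℕ} {V : Type*} [AddCommGroup V] [Module ℂ V]
    (M : Matrix (Fin n) (Fin n) ℂ) (β : Fin n → V) : Set (Fin n → ℤ) :=
  {w | (∀ j, -1 ≤ w j) ∧ (∀ j, j ∉ Jset w → M.mulVec (cvec w) j = 0) ∧
    bmap β (cvec w) = 0}

/-- The set `S(λ, β)` of smoothable weights. -/
def Sset {n : ℕ} {V : Type*} [AddCommGroup V] [Module ℂ V]
    (M : Matrix (Fin n) (Fin n) ℂ) (β : Fin n → V) : Set (Fin n → ℤ) :=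
  {θ | θ ∈ Wset M β ∧ (Jset θ).card = 2}

/-- `S_m`: sums of exactly `m` elements of `S`, repetitions allowed. -/
def SumOf {n : ℕ} (S : Set (Fin n → ℤ)) (m : ℕ) : Set (Fin n → ℤ) :=
  {w | ∃ l : Multiset (Fin n → ℤ), (∀ x ∈ l, x ∈ S) ∧ Multiset.card l = m ∧ l.sum = w}

/-- `S_{≥ m}`: sums of at least `m` elements of `S`, repetitions allowed. -/
def SumGE {n : ℕ} (S : Set (Fin n → ℤ)) (m : ℕ) : Set (Fin n → ℤ) :=
  {w | ∃ m', m ≤ m' ∧ w ∈ SumOf S m'}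

/-- A vector `w ∈ ℤⁿ` is negatively bordered. -/
def NegBordered {n : ℕ} (w : Fin n → ℤ) : Prop :=
  ∃ j k : Fin n, j < k ∧ w j = -1 ∧ w k = -1 ∧ (∀ i, i < j → w i = 0) ∧
    (∀ i, k < i → w i = 0) ∧ (∀ i, j < i → i < k → 0 ≤ w i)

section helpers

variable {n : ℕ} {V : Type*} [AddCommGroup V] [Module ℂ V]

lemma mem_Jset {w : Fin n → ℤ} {a : Fin n} : a ∈ Jset w ↔ w a = -1 := by
  simp [Jset]

lemma cvec_inj : Function.Injective (cvec (n := n)) := by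
  intro x y h
  funext i
  have : (x i : ℂ) = (y i : ℂ) := congrFun h i
  exact_mod_cast this

lemma cvec_zero : cvec (0 : Fin n → ℤ) = 0 := by
  funext i; simp [cvec]

lemma cvec_sum {ι : Type*} (s : Finset ι) (f : ι → Fin n → ℤ) :
    cvec (∑ i ∈ s, f i) = ∑ i ∈ s, cvec (f i) := by
  funext j
  simp [cvec, Finset.sum_apply]

lemma cvec_zsmul (m : ℤ) (x : Fin n → ℤ) : cvec (m • x) = (m : ℂ) • cvec x := by
  funext j
  simp [cvec]

def bmapLin (β : Fin n → V) : (Fin n → ℂ) →ₗ[ℂ] V where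
  toFun := bmap β
  map_add' x y := by simp [bmap, add_smul, Finset.sum_add_distrib]
  map_smul' c x := by simp [bmap, mul_smul, Finset.smul_sum]

lemma bmapLin_apply (β : Fin n → V) (w : Fin n → ℂ) : bmapLin β w = bmap β w := rfl

lemma skew_pair (M : Matrix (Fin n) (Fin n) ℂ) (hskew : Mᵀ = -M) (x y : Fin n → ℂ) :
    x ⬝ᵥ M.mulVec y = -(y ⬝ᵥ M.mulVec x) := by
  rw [Matrix.dotProduct_mulVec, ← Matrix.mulVec_transpose, hskew, Matrix.neg_mulVec,
    neg_dotProduct, dotProduct_comm]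

lemma skew_quad (M : Matrix (Fin n) (Fin n) ℂ) (hskew : Mᵀ = -M) (x : Fin n → ℂ) :
    x ⬝ᵥ M.mulVec x = 0 := by
  have := skew_pair M hskew x x
  linear_combination this / 2

lemma pair_cases {α : Type*} [DecidableEq α] {a b c d : α} (hab : a ≠ b)
    (h : ({a, b} : Finset α) = {c, d}) :
    (c = a ∧ d = b) ∨ (c = b ∧ d = a) := by
  have hc : c ∈ ({a, b} : Finset α) := by rw [h]; simp
  have hd : d ∈ ({a, b} : Finset α) := by rw [h]; simp
  have hb : b ∈ ({c, d} : Finset α) := by rw [← h]; simp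
  have ha : a ∈ ({c, d} : Finset α) := by rw [← h]; simp
  simp only [Finset.mem_insert, Finset.mem_singleton] at hc hd hb ha
  rcases hc with rfl | rfl
  · rcases hd with rfl | rfl
    · tauto
    · tauto
  · rcases hd with rfl | rfl
    · tauto
    · tauto

end helpers

section structure_lemmas

variable {n : ℕ} {V : Type*} [AddCommGroup V] [Module ℂ V]

lemma sset_struct (M : Matrix (Fin n) (Fin n) ℂ) (hskew : Mᵀ = -M)
    (β : Fin n → V) (hTLS : TLogSymp M β) (θ : Fin n → ℤ) (hθ : θ ∈ Sset M β) :
    ∃ j k : Fin n, ∃ c : ℂ, j ≠ k ∧ Jset θ = {j, k} ∧ c ≠ 0 ∧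
      M.mulVec (cvec θ) = c • (Pi.single j 1 - Pi.single k 1) := by
  obtain ⟨⟨hge, hoff, hb⟩, hcard⟩ := hθ
  obtain ⟨j, k, hjk, hJ⟩ := Finset.card_eq_two.1 hcard
  have hjJ : j ∈ Jset θ := by rw [hJ]; simp
  have hkJ : k ∈ Jset θ := by rw [hJ]; simp
  have hθj : θ j = -1 := mem_Jset.1 hjJ
  have hθk : θ k = -1 := mem_Jset.1 hkJ
  have hquad : cvec θ ⬝ᵥ M.mulVec (cvec θ) = 0 := skew_quad M hskew _
  have hsum : ∑ i ∈ ({j, k} : Finset (Fin n)), cvec θ i * M.mulVec (cvec θ) i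
      = cvec θ ⬝ᵥ M.mulVec (cvec θ) := by
    apply Finset.sum_subset (Finset.subset_univ _)
    intro i _ hi
    have : i ∉ Jset θ := by rw [hJ]; exact hi
    rw [hoff i this, mul_zero]
  rw [hquad, Finset.sum_pair hjk] at hsum
  have hcj : cvec θ j = -1 := by simp [cvec, hθj]
  have hck : cvec θ k = -1 := by simp [cvec, hθk]
  rw [hcj, hck] at hsum
  set c := M.mulVec (cvec θ) j with hc
  have hk' : M.mulVec (cvec θ) k = -c := by linear_combination -hsum
  have hMv : M.mulVec (cvec θ) = c • (Pi.single j 1 - Pi.single k 1) := by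
    funext i
    by_cases hij : i = j
    · subst hij
      simp [Pi.single_apply, hjk, Ne.symm hjk, hc]
    · by_cases hik : i = k
      · subst hik
        simp [Pi.single_apply, hjk, Ne.symm hjk, hk']
      · have : i ∉ Jset θ := by
          rw [hJ]; simp [hij, hik]
        rw [hoff i this]
        simp [Pi.single_apply, hij, hik]
  refine ⟨j, k, c, hjk, hJ, ?_, hMv⟩
  intro hc0
  rw [hc0, zero_smul] at hMv
  have := hTLS (cvec θ) hMv hb
  have := congrFun this j
  rw [hcj] at this
  norm_num at this

lemma jset_inj (M : Matrix (Fin n) (Fin n) ℂ) (hskew : Mᵀ = -M)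
    (β : Fin n → V) (hTLS : TLogSymp M β) {θ θ' : Fin n → ℤ}
    (hθ : θ ∈ Sset M β) (hθ' : θ' ∈ Sset M β) (hJJ : Jset θ = Jset θ') : θ = θ' := by
  obtain ⟨j, k, c, hjk, hJ, hc0, hMv⟩ := sset_struct M hskew β hTLS θ hθ
  obtain ⟨j', k', c', hjk', hJ', hc0', hMv'⟩ := sset_struct M hskew β hTLS θ' hθ'
  have hpair : ({j, k} : Finset (Fin n)) = {j', k'} := by rw [← hJ, hJJ, hJ']
  have hd : ∃ d : ℂ, d ≠ 0 ∧ M.mulVec (cvec θ') = d • (Pi.single j 1 - Pi.single k 1) := by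
    rcases pair_cases hjk hpair with ⟨rfl, rfl⟩ | ⟨rfl, rfl⟩
    · exact ⟨c', hc0', hMv'⟩
    · refine ⟨-c', neg_ne_zero.2 hc0', ?_⟩
      rw [hMv', neg_smul, ← smul_neg, neg_sub]
  obtain ⟨d, hd0, hMv'd⟩ := hd
  set u : Fin n → ℂ := d • cvec θ - c • cvec θ' with hu
  have hMu : M.mulVec u = 0 := by
    rw [hu, Matrix.mulVec_sub, Matrix.mulVec_smul, Matrix.mulVec_smul, hMv, hMv'd,
      smul_smul, smul_smul, mul_comm]
    ring_nf
  have hbu : bmap β u = 0 := by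
    have h1 : bmap β (cvec θ) = 0 := hθ.1.2.2
    have h2 : bmap β (cvec θ') = 0 := hθ'.1.2.2
    have : bmapLin β u = 0 := by
      rw [hu, map_sub, LinearMap.map_smul, LinearMap.map_smul, bmapLin_apply, bmapLin_apply, h1, h2,
        smul_zero, smul_zero, sub_zero]
    exact this
  have hu0 : u = 0 := hTLS u hMu hbu
  have hθj : θ j = -1 := mem_Jset.1 (by rw [hJ]; simp)
  have hθ'j : θ' j = -1 := mem_Jset.1 (by rw [← hJJ, hJ]; simp)
  have hcoord := congrFun hu0 j
  rw [hu] at hcoord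
  simp only [Pi.sub_apply, Pi.smul_apply, smul_eq_mul, Pi.zero_apply] at hcoord
  have hcj : cvec θ j = -1 := by simp [cvec, hθj]
  have hc'j : cvec θ' j = -1 := by simp [cvec, hθ'j]
  rw [hcj, hc'j] at hcoord
  have hdc : d = c := by linear_combination -hcoord
  have : cvec θ = cvec θ' := by
    have h2 : d • cvec θ - c • cvec θ' = 0 := hu0
    rw [hdc] at h2
    have h3 : c • (cvec θ - cvec θ') = 0 := by rw [smul_sub]; exact h2
    have := smul_eq_zero.1 h3
    rcases this with h | h
    · exact absurd h hc0
    · exact sub_eq_zero.1 h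
  exact cvec_inj this

end structure_lemmas

section hard

variable {n : ℕ} {V : Type*} [AddCommGroup V] [Module ℂ V]

lemma hard_dir (hn : 0 < n) (M : Matrix (Fin n) (Fin n) ℂ) (hskew : Mᵀ = -M)
    (β : Fin n → V) (hTLS : TLogSymp M β) (S : Set (Fin n → ℤ)) (hS : S ⊆ Sset M β)
    (hdep : ¬ LinearIndependent ℂ (fun θ : S => cvec (θ : Fin n → ℤ))) :
    (0 : Fin n → ℤ) ∈ SumGE S 1 := by
  classical
  rw [linearIndependent_iff'] at hdep
  push_neg at hdep
  obtain ⟨s, g, hrel, x0, hx0s, hx0⟩ := hdep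
  -- ambient coefficient function and support finset
  set G : (Fin n → ℤ) → ℂ := fun θ => if h : θ ∈ S then g ⟨θ, h⟩ else 0 with hGdef
  have hGval : ∀ x : S, G x.1 = g x := by
    intro x; simp [hGdef, x.2]
  set T : Finset (Fin n → ℤ) := (s.image Subtype.val).filter (fun θ => G θ ≠ 0) with hTdef
  have hTS : ∀ θ ∈ T, θ ∈ S := by
    intro θ hθ
    rw [hTdef, Finset.mem_filter, Finset.mem_image] at hθ
    obtain ⟨⟨x, _, rfl⟩, _⟩ := hθ
    exact x.2
  have hG0 : ∀ θ ∈ T, G θ ≠ 0 := by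
    intro θ hθ
    rw [hTdef, Finset.mem_filter] at hθ
    exact hθ.2
  have hrelT : ∑ θ ∈ T, G θ • cvec θ = 0 := by
    rw [hTdef]
    rw [Finset.sum_filter_of_ne (by intro θ _ hne hG; rw [hG, zero_smul] at hne; exact hne rfl)]
    rw [Finset.sum_image (by intro x _ y _ h; exact Subtype.ext h)]
    calc ∑ x ∈ s, G x.1 • cvec x.1 = ∑ x ∈ s, g x • cvec x.1 := by
          apply Finset.sum_congr rfl; intro x _; rw [hGval]
      _ = 0 := hrel
  have hTne : T.Nonempty := by
    refine ⟨x0.1, ?_⟩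
    rw [hTdef, Finset.mem_filter, Finset.mem_image]
    exact ⟨⟨x0, hx0s, rfl⟩, by rw [hGval]; exact hx0⟩
  -- structure data
  have hstruct : ∀ θ : Fin n → ℤ, ∃ j k : Fin n, ∃ c : ℂ, θ ∈ Sset M β →
      (j ≠ k ∧ Jset θ = {j, k} ∧ c ≠ 0 ∧
        M.mulVec (cvec θ) = c • (Pi.single j 1 - Pi.single k 1)) := by
    intro θ
    by_cases hθ : θ ∈ Sset M β
    · obtain ⟨j, k, c, h⟩ := sset_struct M hskew β hTLS θ hθ
      exact ⟨j, k, c, fun _ => h⟩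
    · exact ⟨⟨0, hn⟩, ⟨0, hn⟩, 0, fun h => absurd h hθ⟩
  choose jf kf cf hf using hstruct
  -- mulVec applied to the relation
  have hMrel : ∑ θ ∈ T, G θ • M.mulVec (cvec θ) = 0 := by
    have := congrArg (M.mulVecLin) hrelT
    rw [map_sum, map_zero] at this
    simpa only [LinearMap.map_smul, Matrix.mulVecLin_apply] using this
  -- degree lemma
  have hdeg : ∀ x ∈ T, ∀ a ∈ Jset x, ∃ y ∈ T, y ≠ x ∧ a ∈ Jset y := by
    intro x hx a ha
    by_contra hcon
    push_neg at hcon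
    have hco := congrFun hMrel a
    rw [Finset.sum_apply] at hco
    have hzero : ∀ y ∈ T, y ≠ x → (G y • M.mulVec (cvec y)) a = 0 := by
      intro y hy hyx
      have hyW : y ∈ Wset M β := (hS (hTS y hy)).1
      have := hyW.2.1 a (hcon y hy hyx)
      simp [this]
    have heq := Finset.sum_eq_single_of_mem x hx
      (by intro y hy hyx; exact hzero y hy hyx)
    rw [heq] at hco
    have hxa : M.mulVec (cvec x) a ≠ 0 := by
      obtain ⟨hjk, hJ, hc0, hMv⟩ := hf x (hS (hTS x hx))
      rw [hMv]
      rw [hJ, Finset.mem_insert, Finset.mem_singleton] at ha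
      rcases ha with rfl | rfl
      · simp [Pi.single_apply, hjk, Ne.symm hjk, hc0]
      · simp [Pi.single_apply, hjk, Ne.symm hjk, hc0]
    have : G x • M.mulVec (cvec x) a ≠ 0 := by
      simp only [smul_eq_mul]
      exact mul_ne_zero (hG0 x hx) hxa
    exact this (by simpa using hco)
  -- the walk
  set Good : (Fin n → ℤ) × Fin n × Fin n → Prop :=
    fun z => z.1 ∈ T ∧ Jset z.1 = {z.2.1, z.2.2} ∧ z.2.1 ≠ z.2.2 with hGooddef
  have hstep : ∀ z, ∃ z', Good z → (Good z' ∧ z'.2.1 = z.2.2 ∧ z'.1 ≠ z.1) := by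
    intro z
    by_cases hz : Good z
    · obtain ⟨hzT, hzJ, hzne⟩ := hz
      have hbJ : z.2.2 ∈ Jset z.1 := by rw [hzJ]; simp
      obtain ⟨y, hyT, hyne, hyJ⟩ := hdeg z.1 hzT z.2.2 hbJ
      obtain ⟨hjk, hJ, hc0, hMv⟩ := hf y (hS (hTS y hyT))
      rw [hJ, Finset.mem_insert, Finset.mem_singleton] at hyJ
      rcases hyJ with hcase | hcase
      · refine ⟨(y, z.2.2, kf y), fun _ => ⟨⟨hyT, ?_, ?_⟩, rfl, hyne⟩⟩
        · rw [hJ, hcase]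
        · rw [hcase]; exact hjk
      · refine ⟨(y, z.2.2, jf y), fun _ => ⟨⟨hyT, ?_, ?_⟩, rfl, hyne⟩⟩
        · rw [hJ, hcase]; exact Finset.pair_comm _ _
        · rw [hcase]; exact hjk.symm
    · exact ⟨z, fun h => absurd h hz⟩
  choose stepf hstepf using hstep
  obtain ⟨x1, hx1⟩ := hTne
  obtain ⟨hjk1, hJ1, hc01, hMv1⟩ := hf x1 (hS (hTS x1 hx1))
  set z0 : (Fin n → ℤ) × Fin n × Fin n := (x1, jf x1, kf x1) with hz0def
  have hGood0 : Good z0 := ⟨hx1, hJ1, hjk1⟩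
  set f : ℕ → (Fin n → ℤ) × Fin n × Fin n := fun i => stepf^[i] z0 with hfdef
  have hGoodf : ∀ i, Good (f i) := by
    intro i
    induction i with
    | zero => exact hGood0
    | succ i ih =>
      have : f (i + 1) = stepf (f i) := Function.iterate_succ_apply' stepf i z0
      rw [this]
      exact (hstepf (f i) ih).1
  have hlink : ∀ i, (f (i + 1)).2.1 = (f i).2.2 ∧ (f (i + 1)).1 ≠ (f i).1 := by
    intro i
    have : f (i + 1) = stepf (f i) := Function.iterate_succ_apply' stepf i z0
    rw [this]
    exact (hstepf (f i) (hGoodf i)).2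
  set e : ℕ → Fin n → ℤ := fun i => (f i).1 with hedef
  set v : ℕ → Fin n := fun i => (f i).2.1 with hvdef
  have heT : ∀ i, e i ∈ T := fun i => (hGoodf i).1
  have hJe : ∀ i, Jset (e i) = {v i, v (i + 1)} := by
    intro i
    have h1 := (hGoodf i).2.1
    have h2 := (hlink i).1
    rw [hedef, hvdef]
    rw [h1, ← h2]
  have hvne : ∀ i, v i ≠ v (i + 1) := by
    intro i
    have h1 := (hGoodf i).2.2
    have h2 := (hlink i).1
    show (f i).2.1 ≠ (f (i+1)).2.1
    rw [h2]
    exact h1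
  have hene : ∀ i, e (i + 1) ≠ e i := fun i => (hlink i).2
  -- pigeonhole
  have hrep : ∃ b, ∃ a, a < b ∧ v a = v b := by
    obtain ⟨x, hx, y, hy, hxy, hvv⟩ :=
      Finset.exists_ne_map_eq_of_card_lt_of_maps_to
        (s := Finset.range (n + 1)) (t := (Finset.univ : Finset (Fin n)))
        (by simp) (fun a _ => Finset.mem_univ (v a))
    rcases lt_or_gt_of_ne hxy with h | h
    · exact ⟨y, x, h, hvv⟩
    · exact ⟨x, y, h, hvv.symm⟩
  set q0 := Nat.find hrep with hq0def
  obtain ⟨p, hpq, hvpq⟩ := Nat.find_spec hrep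
  rw [← hq0def] at hpq hvpq
  have vinj : ∀ a b, a < b → b < q0 → v a ≠ v b := by
    intro a b hab hb hv
    exact Nat.find_min hrep hb ⟨a, hab, hv⟩
  -- the cycle has length at least 3
  have h3 : p + 3 ≤ q0 := by
    by_contra hcon
    push_neg at hcon
    have hcases : q0 = p + 1 ∨ q0 = p + 2 := by omega
    rcases hcases with h | h
    · rw [h] at hvpq
      exact hvne p hvpq
    · rw [h] at hvpq
      have hJp : Jset (e p) = {v p, v (p + 1)} := hJe p
      have hJp1 : Jset (e (p + 1)) = {v p, v (p + 1)} := by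
        rw [hJe (p + 1), ← hvpq, Finset.pair_comm]
      have := jset_inj M hskew β hTLS (hS (hTS _ (heT (p+1)))) (hS (hTS _ (heT p)))
        (by rw [hJp, hJp1])
      exact hene p this
  -- orientation
  have horient : ∀ i, ∃ d : ℂ, d ≠ 0 ∧
      M.mulVec (cvec (e i)) = d • (Pi.single (v i) 1 - Pi.single (v (i + 1)) 1) := by
    intro i
    obtain ⟨hjk, hJ, hc0, hMv⟩ := hf (e i) (hS (hTS _ (heT i)))
    have hpair : ({jf (e i), kf (e i)} : Finset (Fin n)) = {v i, v (i + 1)} := by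
      rw [← hJ, hJe i]
    rcases pair_cases hjk hpair with ⟨h1, h2⟩ | ⟨h1, h2⟩
    · exact ⟨cf (e i), hc0, by rw [hMv, h1, h2]⟩
    · refine ⟨-cf (e i), neg_ne_zero.2 hc0, ?_⟩
      rw [hMv, h1, h2, neg_smul, ← smul_neg, neg_sub]
  choose dd hdd0 hddM using horient
  -- entries
  have hentneg : ∀ (θ : Fin n → ℤ) (a : Fin n), θ ∈ Sset M β → a ∈ Jset θ → (θ a : ℂ) = -1 := by
    intro θ a _ ha
    have := mem_Jset.1 ha
    rw [this]; norm_num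
  have hentpos : ∀ (θ : Fin n → ℤ) (a : Fin n), θ ∈ Sset M β → a ∉ Jset θ → 0 ≤ θ a := by
    intro θ a hθ ha
    have h1 := hθ.1.1 a
    have h2 : θ a ≠ -1 := fun h => ha (mem_Jset.2 h)
    omega
  set A : ℕ → ℤ := fun i => e (i + 1) (v i) + 1 with hAdef
  set B : ℕ → ℤ := fun i => e i (v (i + 2)) + 1 with hBdef
  have hvnotJ1 : ∀ i, p ≤ i → i + 2 ≤ q0 → v i ∉ Jset (e (i + 1)) := by
    intro i hpi hi2
    rw [hJe (i + 1), Finset.mem_insert, Finset.mem_singleton]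
    push_neg
    constructor
    · exact hvne i
    · rcases Nat.lt_or_ge (i + 2) q0 with h | h
      · exact vinj i (i + 2) (by omega) h
      · have hq : i + 2 = q0 := by omega
        rw [hq, ← hvpq]
        have : p < i := by omega
        exact fun hc => vinj p i this (by omega) hc.symm
  have hvnotJ2 : ∀ i, p ≤ i → i + 2 ≤ q0 → v (i + 2) ∉ Jset (e i) := by
    intro i hpi hi2
    rw [hJe i, Finset.mem_insert, Finset.mem_singleton]
    push_neg
    rcases Nat.lt_or_ge (i + 2) q0 with h | h
    · exact ⟨fun hc => vinj i (i + 2) (by omega) h hc.symm,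
        fun hc => vinj (i + 1) (i + 2) (by omega) h hc.symm⟩
    · have hq : i + 2 = q0 := by omega
      rw [hq, ← hvpq]
      have hpi' : p < i := by omega
      exact ⟨fun hc => vinj p i hpi' (by omega) hc,
        fun hc => vinj p (i + 1) (by omega) (by omega) hc⟩
  have hApos : ∀ i, p ≤ i → i + 2 ≤ q0 → 1 ≤ A i := by
    intro i hpi hi2
    have := hentpos (e (i + 1)) (v i) (hS (hTS _ (heT (i + 1)))) (hvnotJ1 i hpi hi2)
    simp only [hAdef]; omega
  have hBpos : ∀ i, p ≤ i → i + 2 ≤ q0 → 1 ≤ B i := by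
    intro i hpi hi2
    have := hentpos (e i) (v (i + 2)) (hS (hTS _ (heT i))) (hvnotJ2 i hpi hi2)
    simp only [hBdef]; omega
  -- adjacency relation
  have hadj : ∀ i, p ≤ i → i + 2 ≤ q0 → dd i * (A i : ℂ) = dd (i + 1) * (B i : ℂ) := by
    intro i hpi hi2
    have hsk := skew_pair M hskew (cvec (e (i + 1))) (cvec (e i))
    rw [hddM i, hddM (i + 1)] at hsk
    rw [dotProduct_smul, dotProduct_sub, dotProduct_single,
      dotProduct_single, dotProduct_smul, dotProduct_sub,
      dotProduct_single, dotProduct_single] at hsk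
    have h1 : cvec (e (i + 1)) (v (i + 1)) = -1 := by
      apply hentneg _ _ (hS (hTS _ (heT (i + 1))))
      rw [hJe (i + 1)]; simp
    have h2 : cvec (e i) (v (i + 1)) = -1 := by
      apply hentneg _ _ (hS (hTS _ (heT i)))
      rw [hJe i]; simp
    have h3 : cvec (e (i + 1)) (v i) = (A i : ℂ) - 1 := by
      rw [hAdef]; simp [cvec]
    have h4 : cvec (e i) (v (i + 2)) = (B i : ℂ) - 1 := by
      rw [hBdef]; simp [cvec]
    rw [h1, h2, h3, h4] at hsk
    simp only [smul_eq_mul] at hsk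
    linear_combination hsk
  -- the rescaling integers
  set Mlt : ℕ → ℤ := fun i =>
    (∏ k ∈ Finset.Ico p i, B k) * (∏ k ∈ Finset.Ico i (q0 - 1), A k) with hMltdef
  have hMpos : ∀ i, p ≤ i → i ≤ q0 - 1 → 0 < Mlt i := by
    intro i hpi hi
    simp only [hMltdef]
    apply mul_pos
    · apply Finset.prod_pos
      intro k hk
      rw [Finset.mem_Ico] at hk
      have := hBpos k hk.1 (by omega)
      omega
    · apply Finset.prod_pos
      intro k hk
      rw [Finset.mem_Ico] at hk
      have := hApos k (by omega) (by omega)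
      omega
  have hrec : ∀ i, p ≤ i → i + 1 ≤ q0 - 1 → Mlt (i + 1) * A i = Mlt i * B i := by
    intro i hpi hi
    simp only [hMltdef]
    rw [Finset.prod_Ico_succ_top hpi]
    rw [Finset.prod_eq_prod_Ico_succ_bot (show i < q0 - 1 by omega) A]
    ring
  have hconst : ∀ i, p ≤ i → i ≤ q0 - 1 → (Mlt i : ℂ) * dd i = (Mlt p : ℂ) * dd p := by
    intro i hpi
    induction i, hpi using Nat.le_induction with
    | base => intro _; rfl
    | succ i hpi ih =>
      intro hi1
      have hi : i ≤ q0 - 1 := by omega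
      have hi2 : i + 2 ≤ q0 := by omega
      have hrec' := hrec i hpi hi1
      have hadj' := hadj i hpi hi2
      have hBne : (B i : ℂ) ≠ 0 := by
        have := hBpos i hpi hi2
        exact Int.cast_ne_zero.mpr (by omega)
      apply mul_right_cancel₀ hBne
      calc (Mlt (i + 1) : ℂ) * dd (i + 1) * (B i : ℂ)
          = (Mlt (i + 1) : ℂ) * (dd (i + 1) * (B i : ℂ)) := by ring
        _ = (Mlt (i + 1) : ℂ) * (dd i * (A i : ℂ)) := by rw [← hadj']
        _ = ((Mlt (i + 1) * A i : ℤ) : ℂ) * dd i := by push_cast; ring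
        _ = ((Mlt i * B i : ℤ) : ℂ) * dd i := by rw [hrec']
        _ = ((Mlt i : ℂ) * dd i) * (B i : ℂ) := by push_cast; ring
        _ = ((Mlt p : ℂ) * dd p) * (B i : ℂ) := by rw [ih hi]
  -- the vanishing combination
  set K : ℂ := (Mlt p : ℂ) * dd p with hKdef
  set w : Fin n → ℤ := ∑ i ∈ Finset.Ico p q0, Mlt i • e i with hwdef
  have hcw : cvec w = ∑ i ∈ Finset.Ico p q0, (Mlt i : ℂ) • cvec (e i) := by
    rw [hwdef, cvec_sum]
    apply Finset.sum_congr rfl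
    intro i _
    rw [cvec_zsmul]
  have hMw : M.mulVec (cvec w) = 0 := by
    have h0 : M.mulVecLin (cvec w)
        = ∑ i ∈ Finset.Ico p q0, (Mlt i : ℂ) • M.mulVec (cvec (e i)) := by
      rw [hcw, map_sum]
      simp only [LinearMap.map_smul, Matrix.mulVecLin_apply]
    rw [← Matrix.mulVecLin_apply, h0]
    have h1 : ∀ i ∈ Finset.Ico p q0, (Mlt i : ℂ) • M.mulVec (cvec (e i))
        = K • (Pi.single (v i) (1 : ℂ) - Pi.single (v (i + 1)) 1) := by
      intro i hi
      rw [Finset.mem_Ico] at hi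
      rw [hddM i, smul_smul, hconst i hi.1 (by omega), hKdef]
    rw [Finset.sum_congr rfl h1, ← Finset.smul_sum]
    set sing : Fin n → (Fin n → ℂ) := fun a => Pi.single a 1 with hsingdef
    have h2 : ∑ i ∈ Finset.Ico p q0,
        (sing (v i) - sing (v (i + 1))) = (0 : Fin n → ℂ) := by
      rw [Finset.sum_Ico_eq_sum_range]
      have h3 : ∑ k ∈ Finset.range (q0 - p),
          (sing (v (p + k)) - sing (v (p + k + 1)))
          = sing (v (p + 0)) - sing (v (p + (q0 - p))) := by
        exact Finset.sum_range_sub' (fun k => sing (v (p + k))) (q0 - p)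
      rw [h3]
      have h4 : p + 0 = p := rfl
      have h5 : p + (q0 - p) = q0 := by omega
      rw [h4, h5, hvpq, sub_self]
    rw [show ∑ i ∈ Finset.Ico p q0, (Pi.single (v i) (1:ℂ) - Pi.single (v (i + 1)) 1)
      = ∑ i ∈ Finset.Ico p q0, (sing (v i) - sing (v (i + 1))) from rfl, h2, smul_zero]
  have hbmapw : bmap β (cvec w) = 0 := by
    have hb : bmapLin β (cvec w) = 0 := by
      rw [hcw, map_sum]
      apply Finset.sum_eq_zero
      intro i _
      rw [LinearMap.map_smul, bmapLin_apply, (hS (hTS _ (heT i))).1.2.2, smul_zero]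
    exact hb
  have hw0 : w = 0 := by
    have := hTLS (cvec w) hMw hbmapw
    apply cvec_inj
    rw [this, cvec_zero]
  -- building the multiset witness
  set l : Multiset (Fin n → ℤ) :=
    (Finset.Ico p q0).val.bind (fun i => Multiset.replicate (Mlt i).toNat (e i)) with hldef
  have hcard : Multiset.card l = ∑ i ∈ Finset.Ico p q0, (Mlt i).toNat := by
    rw [hldef, Multiset.card_bind]
    rw [show (Multiset.card ∘ fun i => Multiset.replicate (Mlt i).toNat (e i))
      = fun i => (Mlt i).toNat from funext fun i => Multiset.card_replicate _ _]
    rfl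
  refine ⟨Multiset.card l, ?_, l, ?_, rfl, ?_⟩
  · rw [hcard]
    have h6 : (Mlt p).toNat ≤ ∑ i ∈ Finset.Ico p q0, (Mlt i).toNat :=
      Finset.single_le_sum (f := fun i => (Mlt i).toNat) (fun i _ => Nat.zero_le _)
        (Finset.mem_Ico.2 ⟨le_rfl, by omega⟩)
    have h7 := hMpos p le_rfl (by omega)
    omega
  · intro x hx
    obtain ⟨i, hi, hxi⟩ := Multiset.mem_bind.1 hx
    rw [Multiset.eq_of_mem_replicate hxi]
    exact hTS _ (heT i)
  · have hsum : l.sum = ∑ i ∈ Finset.Ico p q0, (Mlt i).toNat • e i := by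
      rw [hldef, Multiset.sum_bind]
      simp only [Multiset.sum_replicate]
      rfl
    rw [hsum]
    have h8 : ∀ i ∈ Finset.Ico p q0, (Mlt i).toNat • e i = Mlt i • e i := by
      intro i hi
      rw [Finset.mem_Ico] at hi
      rw [← natCast_zsmul, Int.toNat_of_nonneg (le_of_lt (hMpos i hi.1 (by omega)))]
    rw [Finset.sum_congr rfl h8, ← hwdef, hw0]

end hard

theorem stmt4 (n : ℕ) (hn : 0 < n) (M : Matrix (Fin n) (Fin n) ℂ) (hskew : Mᵀ = -M)
    {V : Type*} [AddCommGroup V] [Module ℂ V] (β : Fin n → V)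
    (hTLS : TLogSymp M β) (S : Set (Fin n → ℤ)) (hS : S ⊆ Sset M β)
    (hne : S.Nonempty) :
    ((LinearIndependent ℂ (fun θ : S => cvec (θ : Fin n → ℤ))) ↔
      (∀ t : Finset (Fin n → ℤ), ↑t ⊆ S → ∀ m : (Fin n → ℤ) → ℤ,
        ∑ θ ∈ t, m θ • θ = 0 → ∀ θ ∈ t, m θ = 0)) ∧
    ((∀ t : Finset (Fin n → ℤ), ↑t ⊆ S → ∀ m : (Fin n → ℤ) → ℤ,
        ∑ θ ∈ t, m θ • θ = 0 → ∀ θ ∈ t, m θ = 0) ↔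
      (0 : Fin n → ℤ) ∉ SumGE S 1) := by
  classical
  have I12 : (LinearIndependent ℂ (fun θ : S => cvec (θ : Fin n → ℤ))) →
      (∀ t : Finset (Fin n → ℤ), ↑t ⊆ S → ∀ m : (Fin n → ℤ) → ℤ,
        ∑ θ ∈ t, m θ • θ = 0 → ∀ θ ∈ t, m θ = 0) := by
    intro hLI t ht m hsum θ hθ
    rw [linearIndependent_iff'] at hLI
    have hembinj : Function.Injective (fun x : {x // x ∈ t} => (⟨x.1, ht x.2⟩ : S)) := by
      intro x y h
      simp only [Subtype.mk.injEq] at h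
      exact Subtype.ext h
    set emb : {x // x ∈ t} ↪ S := ⟨fun x => ⟨x.1, ht x.2⟩, hembinj⟩ with hembdef
    set s : Finset S := t.attach.map emb with hsdef
    have hrelC : ∑ y ∈ s, ((m y.1 : ℂ)) • cvec (y : Fin n → ℤ) = 0 := by
      rw [hsdef, Finset.sum_map]
      have : ∑ x ∈ t.attach, (m (emb x).1 : ℂ) • cvec ((emb x) : Fin n → ℤ)
          = ∑ x ∈ t.attach, (m x.1 : ℂ) • cvec x.1 := rfl
      rw [this, Finset.sum_attach t (fun θ => (m θ : ℂ) • cvec θ)]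
      rw [← cvec_zero, ← hsum, cvec_sum]
      apply Finset.sum_congr rfl
      intro x _
      rw [cvec_zsmul]
    have := hLI s (fun y => (m y.1 : ℂ)) hrelC ⟨θ, ht hθ⟩
      (by rw [hsdef, Finset.mem_map]; exact ⟨⟨θ, hθ⟩, t.mem_attach _, rfl⟩)
    have h' : (m θ : ℂ) = 0 := this
    exact_mod_cast h'
  have I23 : (∀ t : Finset (Fin n → ℤ), ↑t ⊆ S → ∀ m : (Fin n → ℤ) → ℤ,
        ∑ θ ∈ t, m θ • θ = 0 → ∀ θ ∈ t, m θ = 0) →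
      (0 : Fin n → ℤ) ∉ SumGE S 1 := by
    intro h2 hmem
    obtain ⟨m', hm', l, hlS, hlcard, hlsum⟩ := hmem
    have hsum : ∑ θ ∈ l.toFinset, (l.count θ : ℤ) • θ = 0 := by
      have h0 : l.sum = ∑ a ∈ l.toFinset, l.count a • a := by
        have := Finset.sum_multiset_map_count l (id : (Fin n → ℤ) → (Fin n → ℤ))
        rw [Multiset.map_id] at this
        exact this
      rw [show ∑ θ ∈ l.toFinset, (l.count θ : ℤ) • θ = ∑ θ ∈ l.toFinset, l.count θ • θ from
        Finset.sum_congr rfl (fun θ _ => natCast_zsmul _ _), ← h0, hlsum]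
    have hall := h2 l.toFinset (fun θ hθ => hlS θ (Multiset.mem_toFinset.1 hθ))
      (fun θ => (l.count θ : ℤ)) hsum
    have hl0 : l = 0 := by
      rw [Multiset.eq_zero_iff_forall_notMem]
      intro x hx
      have := hall x (Multiset.mem_toFinset.2 hx)
      have h'' : ((l.count x : ℤ)) = 0 := this
      have hc : l.count x = 0 := by exact_mod_cast h''
      rw [← Multiset.count_pos] at hx
      omega
    rw [hl0] at hlcard
    simp at hlcard
    omega
  have I31 : ((0 : Fin n → ℤ) ∉ SumGE S 1) →
      (LinearIndependent ℂ (fun θ : S => cvec (θ : Fin n → ℤ))) := by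
    intro h3
    by_contra hdep
    exact h3 (hard_dir hn M hskew β hTLS S hS hdep)
  exact ⟨⟨I12, fun h => I31 (I23 h)⟩, ⟨I23, fun h => I12 (I31 h)⟩⟩
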